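/- arXiv:2206.09172 — 2 statements merged into one kernel-verified Lean document; each statement's English description precedes it below -/
import Mathlib

section
/- (Singularity criterion of type D, k ≤ n−2; the key step of the main theorem for D_n/P(α_k).) Let n ≥ 3 and 1 ≤ k ≤ n−2, and let a_1,…,a_n be nonnegative integers. Then for every integer t, there exists a positive root α ∈ Φ⁺_D with ⟨w(t), α⟩ = 0 if and only if t belongs to the step-matrix entry set S^D_{k,a}. -/
open Finset

/-- The positive roots of type `Dₙ`: `eₚ+e_q` and `eₚ-e_q` (`p<q`). -/
def PhiD (n : ℕ) : Set (Fin n → ℝ) :=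
  {α | ∃ p q : Fin n, p < q ∧
      α = fun i => (if i = p then (1:ℝ) else 0) + (if i = q then 1 else 0)} ∪
  {α | ∃ p q : Fin n, p < q ∧
      α = fun i => (if i = p then (1:ℝ) else 0) - (if i = q then 1 else 0)}

/-- Standard inner product on `ℝⁿ`. -/
noncomputable def ip (n : ℕ) (v w : Fin n → ℝ) : ℝ := ∑ i, v i * w i

/-- The coordinate form of the weight `λ+ρ-tλ_k` for type `Dₙ`, `k ≤ n-2`
(coordinates are indexed one-based). -/
noncomputable def wD (n k : ℕ) (a : ℕ → ℤ) (t : ℤ) : Fin n → ℝ := fun i =>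
  if i.val + 1 = n then ((a n : ℝ) - (a (n - 1) : ℝ)) / 2
  else (∑ u ∈ Icc (i.val + 1) (n - 2), (a u : ℝ)) + ((a (n - 1) : ℝ) + (a n : ℝ)) / 2
    + ((n : ℝ) - (i.val + 1)) - (if i.val + 1 ≤ k then (t : ℝ) else 0)

/-- The step-matrix entry set `S^D_{k,a}`. -/
def SD (n k : ℕ) (a : ℕ → ℤ) : Set ℚ :=
  {x | ∃ i j : ℕ, 1 ≤ i ∧ i ≤ k ∧ 1 ≤ j ∧ j ≤ n - k ∧
    x = (∑ u ∈ Icc (k + 1 - i) (k + j - 1), (a u : ℚ)) + i + j - 1} ∪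
  {x | ∃ i j : ℕ, 1 ≤ i ∧ i ≤ k ∧ 1 ≤ j ∧ j ≤ n - k ∧
    x = (∑ u ∈ Icc (k + 1 - i) (n - 2), (a u : ℚ))
      + (∑ u ∈ Icc (n + 1 - j) n, (a u : ℚ))
      + n - k + i + j - 2} ∪
  {x | ∃ i j : ℕ, 1 ≤ i ∧ i < j ∧ j ≤ k ∧
    x = ((∑ u ∈ Icc (k + 1 - i) (n - 2), (a u : ℚ))
      + (∑ u ∈ Icc (k + 1 - j) n, (a u : ℚ))
      + i + j + 2 * n - 2 * k - 2) / 2}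

/-- One-based rational coordinates of the weight `λ+ρ-tλ_k`. -/
def Wq (n k : ℕ) (a : ℕ → ℤ) (t : ℤ) (m : ℕ) : ℚ :=
  if m = n then ((a n : ℚ) - (a (n - 1) : ℚ)) / 2
  else (∑ u ∈ Icc m (n - 2), (a u : ℚ)) + ((a (n - 1) : ℚ) + (a n : ℚ)) / 2
    + ((n : ℚ) - m) - (if m ≤ k then (t : ℚ) else 0)

lemma wD_eq (n k : ℕ) (a : ℕ → ℤ) (t : ℤ) (i : Fin n) :
    wD n k a t i = ((Wq n k a t (i.val + 1) : ℚ) : ℝ) := by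
  unfold wD Wq
  by_cases h : i.val + 1 = n
  · rw [if_pos h, if_pos h]; push_cast; ring
  · rw [if_neg h, if_neg h]
    by_cases h2 : i.val + 1 ≤ k
    · rw [if_pos h2, if_pos h2]; push_cast; ring
    · rw [if_neg h2, if_neg h2]; push_cast; ring

lemma ip_add_root (n : ℕ) (v : Fin n → ℝ) (p q : Fin n) :
    ip n v (fun i => (if i = p then (1:ℝ) else 0) + (if i = q then 1 else 0)) = v p + v q := by
  unfold ip
  simp [mul_add, mul_ite, mul_one, mul_zero, Finset.sum_add_distrib]

lemma ip_sub_root (n : ℕ) (v : Fin n → ℝ) (p q : Fin n) :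
    ip n v (fun i => (if i = p then (1:ℝ) else 0) - (if i = q then 1 else 0)) = v p - v q := by
  unfold ip
  simp [mul_sub, mul_ite, mul_one, mul_zero, Finset.sum_sub_distrib]

lemma IccIco (lo hi hi' : ℕ) (h : hi' = hi + 1) :
    (Icc lo hi : Finset ℕ) = Ico lo hi' := by
  subst h; exact (Finset.Ico_add_one_right_eq_Icc lo hi).symm

lemma Ico_single (a : ℕ → ℤ) (m m' : ℕ) (h : m' = m + 1) :
    ∑ u ∈ Ico m m', ((a u : ℚ)) = a m := by
  subst h; rw [Nat.Ico_succ_singleton, Finset.sum_singleton]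

lemma Wsub (n k : ℕ) (a : ℕ → ℤ) (t : ℤ) (P Q : ℕ) (hn : 3 ≤ n) (hk : k ≤ n - 2)
    (hP : 1 ≤ P) (hPQ : P < Q) (hQ : Q ≤ n) :
    Wq n k a t P - Wq n k a t Q
      = (∑ u ∈ Ico P Q, (a u : ℚ)) + ((Q : ℚ) - (P : ℚ))
        - (if P ≤ k then (t : ℚ) else 0) + (if Q ≤ k then (t : ℚ) else 0) := by
  have hPn : P ≠ n := by omega
  unfold Wq
  rw [if_neg hPn]
  by_cases hQn : Q = n
  · subst hQn
    rw [if_pos rfl, if_neg (show ¬ Q ≤ k by omega),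
      IccIco P (Q-2) (Q-1) (by omega),
      ← Finset.sum_Ico_consecutive (fun u => ((a u : ℤ) : ℚ)) (show P ≤ Q-1 by omega)
        (show Q-1 ≤ Q by omega),
      Ico_single a (Q-1) Q (by omega)]
    ring
  · rw [if_neg hQn,
      IccIco P (n-2) (n-1) (by omega), IccIco Q (n-2) (n-1) (by omega),
      ← Finset.sum_Ico_consecutive (fun u => ((a u : ℤ) : ℚ)) (show P ≤ Q by omega)
        (show Q ≤ n-1 by omega)]
    ring

lemma Wadd (n k : ℕ) (a : ℕ → ℤ) (t : ℤ) (P Q : ℕ) (hn : 3 ≤ n) (hk : k ≤ n - 2)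
    (hP : 1 ≤ P) (hPQ : P < Q) (hQ : Q ≤ n) :
    Wq n k a t P + Wq n k a t Q
      = (∑ u ∈ Ico P (n-1), (a u : ℚ)) + (∑ u ∈ Ico Q (n+1), (a u : ℚ))
        + (2 * (n : ℚ) - (P : ℚ) - (Q : ℚ))
        - (if P ≤ k then (t : ℚ) else 0) - (if Q ≤ k then (t : ℚ) else 0) := by
  have hPn : P ≠ n := by omega
  unfold Wq
  rw [if_neg hPn, IccIco P (n-2) (n-1) (by omega)]
  by_cases hQn : Q = n
  · subst hQn
    rw [if_pos rfl, if_neg (show ¬ Q ≤ k by omega), Ico_single a Q (Q+1) rfl]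
    ring
  · rw [if_neg hQn, IccIco Q (n-2) (n-1) (by omega),
      ← Finset.sum_Ico_consecutive (fun u => ((a u : ℤ) : ℚ)) (show Q ≤ n-1 by omega)
        (show n-1 ≤ n+1 by omega),
      ← Finset.sum_Ico_consecutive (fun u => ((a u : ℤ) : ℚ)) (show n-1 ≤ n by omega)
        (show n ≤ n+1 by omega),
      Ico_single a (n-1) n (by omega), Ico_single a n (n+1) rfl]
    ring

lemma swapSum (n : ℕ) (a : ℕ → ℤ) (P Q : ℕ) (hPQ : P ≤ Q) (hQ : Q ≤ n - 1) :
    (∑ u ∈ Ico Q (n-1), (a u : ℚ)) + ∑ u ∈ Ico P (n+1), (a u : ℚ)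
      = (∑ u ∈ Ico P (n-1), (a u : ℚ)) + ∑ u ∈ Ico Q (n+1), (a u : ℚ) := by
  rw [← Finset.sum_Ico_consecutive (fun u => ((a u : ℤ) : ℚ)) (show P ≤ n-1 by omega)
      (show n-1 ≤ n+1 by omega),
    ← Finset.sum_Ico_consecutive (fun u => ((a u : ℤ) : ℚ)) (show Q ≤ n-1 by omega)
      (show n-1 ≤ n+1 by omega)]
  ring

lemma sum_nn (n : ℕ) (a : ℕ → ℤ) (ha : ∀ u, 1 ≤ u → u ≤ n → 0 ≤ a u)
    (lo hi : ℕ) (h1 : 1 ≤ lo) (h2 : hi ≤ n + 1) :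
    0 ≤ ∑ u ∈ Ico lo hi, (a u : ℚ) := by
  refine Finset.sum_nonneg fun u hu => ?_
  rw [Finset.mem_Ico] at hu
  exact_mod_cast ha u (by omega) (by omega)

/-- Singularity criterion of type `D`, `k ≤ n-2`: `λ+ρ-tλ_k` is singular iff `t` is an
entry of the step matrix `T^D_{k,λ}`. -/
theorem singular_criterion_D_lt (n k : ℕ) (hn : 3 ≤ n) (hk1 : 1 ≤ k) (hkn : k ≤ n - 2)
    (a : ℕ → ℤ) (ha : ∀ u, 1 ≤ u → u ≤ n → 0 ≤ a u) (t : ℤ) :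
    (∃ α ∈ PhiD n, ip n (wD n k a t) α = 0) ↔ (t : ℚ) ∈ SD n k a := by
  constructor
  · rintro ⟨α, hα, hip⟩
    simp only [SD, Set.mem_union, Set.mem_setOf_eq]
    rcases hα with ⟨p, q, hpq, rfl⟩ | ⟨p, q, hpq, rfl⟩
    · -- sum root e_p + e_q
      rw [ip_add_root n (wD n k a t) p q, wD_eq n k a t p, wD_eq n k a t q] at hip
      have hip' : Wq n k a t (p.val + 1) + Wq n k a t (q.val + 1) = 0 := by exact_mod_cast hip
      have hq := q.isLt
      have hlt := Fin.lt_def.1 hpq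
      set P := p.val + 1 with hPdef
      set Q := q.val + 1 with hQdef
      have hP : 1 ≤ P := by omega
      have hPQ : P < Q := by omega
      have hQ : Q ≤ n := by omega
      rw [Wadd n k a t P Q hn hkn hP hPQ hQ] at hip'
      have hPc : (P : ℚ) = ((p : ℕ) : ℚ) + 1 := by exact_mod_cast hPdef
      have hQc : (Q : ℚ) = ((q : ℕ) : ℚ) + 1 := by exact_mod_cast hQdef
      by_cases hQk : Q ≤ k
      · -- both ≤ k : third form
        rw [if_pos (show P ≤ k by omega), if_pos hQk] at hip'
        right
        refine ⟨k + 1 - Q, k + 1 - P, by omega, by omega, by omega, ?_⟩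
        rw [show k + 1 - (k + 1 - Q) = Q by omega, show k + 1 - (k + 1 - P) = P by omega,
          IccIco Q (n-2) (n-1) (by omega), IccIco P n (n+1) rfl,
          Nat.cast_sub (show Q ≤ k + 1 by omega), Nat.cast_sub (show P ≤ k + 1 by omega)]
        have hswap := swapSum n a P Q (le_of_lt hPQ) (by omega)
        push_cast
        linarith [hip', hswap, hPc, hQc]
      · by_cases hPk : P ≤ k
        · -- second form
          rw [if_pos hPk, if_neg hQk] at hip'
          left; right
          refine ⟨k + 1 - P, n + 1 - Q, by omega, by omega, by omega, by omega, ?_⟩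
          rw [show k + 1 - (k + 1 - P) = P by omega, show n + 1 - (n + 1 - Q) = Q by omega,
            IccIco P (n-2) (n-1) (by omega), IccIco Q n (n+1) rfl,
            Nat.cast_sub (show P ≤ k + 1 by omega), Nat.cast_sub (show Q ≤ n + 1 by omega)]
          push_cast
          linarith [hip', hPc, hQc]
        · -- both > k : impossible
          exfalso
          rw [if_neg hPk, if_neg hQk] at hip'
          have h1 := sum_nn n a ha P (n-1) hP (by omega)
          have h2 := sum_nn n a ha Q (n+1) (by omega) (by omega)
          have h3 : (P : ℚ) + (Q : ℚ) < 2 * (n : ℚ) := by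
            exact_mod_cast (show (P + Q : ℕ) < 2 * n by omega)
          linarith
    · -- difference root e_p - e_q
      rw [ip_sub_root n (wD n k a t) p q, wD_eq n k a t p, wD_eq n k a t q] at hip
      have hip' : Wq n k a t (p.val + 1) - Wq n k a t (q.val + 1) = 0 := by exact_mod_cast hip
      have hq := q.isLt
      have hlt := Fin.lt_def.1 hpq
      set P := p.val + 1 with hPdef
      set Q := q.val + 1 with hQdef
      have hP : 1 ≤ P := by omega
      have hPQ : P < Q := by omega
      have hQ : Q ≤ n := by omega
      rw [Wsub n k a t P Q hn hkn hP hPQ hQ] at hip'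
      have hPc : (P : ℚ) = ((p : ℕ) : ℚ) + 1 := by exact_mod_cast hPdef
      have hQc : (Q : ℚ) = ((q : ℕ) : ℚ) + 1 := by exact_mod_cast hQdef
      have hsum := sum_nn n a ha P Q hP (by omega)
      have hcast : (P : ℚ) < (Q : ℚ) := by exact_mod_cast hPQ
      by_cases hQk : Q ≤ k
      · -- both ≤ k : impossible
        exfalso
        rw [if_pos (show P ≤ k by omega), if_pos hQk] at hip'
        linarith
      · by_cases hPk : P ≤ k
        · -- first form
          rw [if_pos hPk, if_neg hQk] at hip'
          left; left
          refine ⟨k + 1 - P, Q - k, by omega, by omega, by omega, by omega, ?_⟩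
          rw [show k + 1 - (k + 1 - P) = P by omega, show k + (Q - k) - 1 = Q - 1 by omega,
            IccIco P (Q-1) Q (by omega),
            Nat.cast_sub (show P ≤ k + 1 by omega), Nat.cast_sub (show k ≤ Q by omega)]
          push_cast
          linarith [hip', hPc, hQc]
        · -- both > k : impossible
          exfalso
          rw [if_neg hPk, if_neg hQk] at hip'
          linarith
  · intro h
    simp only [SD, Set.mem_union, Set.mem_setOf_eq] at h
    rcases h with (⟨i, j, hi1, hik, hj1, hjn, hx⟩ | ⟨i, j, hi1, hik, hj1, hjn, hx⟩) |
      ⟨i, j, hi1, hij, hjk, hx⟩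
    · -- first form : root e_P - e_Q with P = k+1-i, Q = k+j
      set P := k + 1 - i with hPdef
      set Q := k + j with hQdef
      have hP : 1 ≤ P := by omega
      have hPQ : P < Q := by omega
      have hQ : Q ≤ n := by omega
      refine ⟨_, Or.inr ⟨⟨P - 1, by omega⟩, ⟨Q - 1, by omega⟩,
        Fin.mk_lt_mk.2 (by omega), rfl⟩, ?_⟩
      rw [ip_sub_root, wD_eq, wD_eq]
      show ((Wq n k a t ((P - 1) + 1) : ℚ) : ℝ) - ((Wq n k a t ((Q - 1) + 1) : ℚ) : ℝ) = 0
      rw [show P - 1 + 1 = P by omega, show Q - 1 + 1 = Q by omega]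
      have hz : Wq n k a t P - Wq n k a t Q = 0 := by
        rw [Wsub n k a t P Q hn hkn hP hPQ hQ, if_pos (show P ≤ k by omega),
          if_neg (show ¬ Q ≤ k by omega)]
        rw [show k + j - 1 = Q - 1 by omega, IccIco P (Q-1) Q (by omega)] at hx
        have hiq : (i : ℚ) + (P : ℚ) = (k : ℚ) + 1 := by
          exact_mod_cast (show (i + P : ℕ) = k + 1 by omega)
        have hjq : (k : ℚ) + (j : ℚ) = (Q : ℚ) := by
          exact_mod_cast (show (k + j : ℕ) = Q by omega)
        linarith [hx]
      rw [← Rat.cast_sub, hz, Rat.cast_zero]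
    · -- second form : root e_P + e_Q with P = k+1-i, Q = n+1-j
      set P := k + 1 - i with hPdef
      set Q := n + 1 - j with hQdef
      have hP : 1 ≤ P := by omega
      have hPQ : P < Q := by omega
      have hQ : Q ≤ n := by omega
      refine ⟨_, Or.inl ⟨⟨P - 1, by omega⟩, ⟨Q - 1, by omega⟩,
        Fin.mk_lt_mk.2 (by omega), rfl⟩, ?_⟩
      rw [ip_add_root, wD_eq, wD_eq]
      show ((Wq n k a t ((P - 1) + 1) : ℚ) : ℝ) + ((Wq n k a t ((Q - 1) + 1) : ℚ) : ℝ) = 0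
      rw [show P - 1 + 1 = P by omega, show Q - 1 + 1 = Q by omega]
      have hz : Wq n k a t P + Wq n k a t Q = 0 := by
        rw [Wadd n k a t P Q hn hkn hP hPQ hQ, if_pos (show P ≤ k by omega),
          if_neg (show ¬ Q ≤ k by omega)]
        rw [IccIco P (n-2) (n-1) (by omega), IccIco Q n (n+1) rfl] at hx
        have hiq : (i : ℚ) + (P : ℚ) = (k : ℚ) + 1 := by
          exact_mod_cast (show (i + P : ℕ) = k + 1 by omega)
        have hjq : (j : ℚ) + (Q : ℚ) = (n : ℚ) + 1 := by
          exact_mod_cast (show (j + Q : ℕ) = n + 1 by omega)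
        linarith [hx]
      rw [← Rat.cast_add, hz, Rat.cast_zero]
    · -- third form : root e_P + e_Q with P = k+1-j, Q = k+1-i
      set P := k + 1 - j with hPdef
      set Q := k + 1 - i with hQdef
      have hP : 1 ≤ P := by omega
      have hPQ : P < Q := by omega
      have hQ : Q ≤ n := by omega
      refine ⟨_, Or.inl ⟨⟨P - 1, by omega⟩, ⟨Q - 1, by omega⟩,
        Fin.mk_lt_mk.2 (by omega), rfl⟩, ?_⟩
      rw [ip_add_root, wD_eq, wD_eq]
      show ((Wq n k a t ((P - 1) + 1) : ℚ) : ℝ) + ((Wq n k a t ((Q - 1) + 1) : ℚ) : ℝ) = 0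
      rw [show P - 1 + 1 = P by omega, show Q - 1 + 1 = Q by omega]
      have hz : Wq n k a t P + Wq n k a t Q = 0 := by
        rw [Wadd n k a t P Q hn hkn hP hPQ hQ, if_pos (show P ≤ k by omega),
          if_pos (show Q ≤ k by omega)]
        rw [IccIco Q (n-2) (n-1) (by omega), IccIco P n (n+1) rfl] at hx
        have hswap := swapSum n a P Q (le_of_lt hPQ) (by omega)
        have hiq : (i : ℚ) + (Q : ℚ) = (k : ℚ) + 1 := by
          exact_mod_cast (show (i + Q : ℕ) = k + 1 by omega)
        have hjq : (j : ℚ) + (P : ℚ) = (k : ℚ) + 1 := by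
          exact_mod_cast (show (j + P : ℕ) = k + 1 by omega)
        linarith [hx, hswap]
      rw [← Rat.cast_add, hz, Rat.cast_zero]
end

section
/- (Combinatorial content of Corollary 3.15, type B, k = n.) Let n ≥ 3 and let a_1,…,a_n be integers with a_1 = a_{n−1} = a_n = 0 and 0 ≤ a_u ≤ 1 for all 2 ≤ u ≤ n−2. Then every integer l with 1 ≤ l ≤ M^B_{n,a} = 2Σ_{u=2}^{n−2} a_u + 2n − 1 belongs to the step-matrix entry set S^B_{n,a}. -/
open Finset

/-- The step-matrix entry set `S^B_{n,a}` (the case `k = n`). -/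
def SBn (n : ℕ) (a : ℕ → ℤ) : Set ℚ :=
  {x | ∃ i j : ℕ, 1 ≤ i ∧ i ≤ j ∧ j ≤ n ∧
    x = (∑ u ∈ Icc (n + 1 - i) (n - 1), (a u : ℚ))
      + (∑ u ∈ Icc (n + 1 - j) (n - 1), (a u : ℚ)) + (a n : ℚ) + i + j - 1}

/-- Auxiliary step function: `gB n a i = (∑_{u=n+1-i}^{n-1} a u) + i`. -/
def gB (n : ℕ) (a : ℕ → ℤ) (i : ℕ) : ℤ :=
  (∑ u ∈ Icc (n + 1 - i) (n - 1), a u) + i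

lemma gB_step (n : ℕ) (a : ℕ → ℤ) (i : ℕ) (h1 : 1 ≤ i) (h2 : i < n) :
    gB n a (i + 1) = gB n a i + a (n - i) + 1 := by
  unfold gB
  have hni : n + 1 - (i + 1) = n - i := by omega
  have hle : n - i ≤ n - 1 := by omega
  have hsucc : n - i + 1 = n + 1 - i := by omega
  rw [hni, Finset.Icc_eq_cons_Ioc hle, Finset.sum_cons, ← Finset.Icc_add_one_left_eq_Ioc,
    hsucc]
  push_cast
  ring

lemma gB_one (n : ℕ) (a : ℕ → ℤ) (hn : 1 ≤ n) : gB n a 1 = 1 := by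
  unfold gB
  rw [Finset.Icc_eq_empty (by omega)]
  simp

lemma gB_two (n : ℕ) (a : ℕ → ℤ) (hn : 2 ≤ n) (hn1 : a (n - 1) = 0) : gB n a 2 = 2 := by
  unfold gB
  have : n + 1 - 2 = n - 1 := by omega
  rw [this, Finset.Icc_self, Finset.sum_singleton, hn1]
  norm_num

lemma gB_top (n : ℕ) (a : ℕ → ℤ) (hn : 3 ≤ n) (h1 : a 1 = 0) (hn1 : a (n - 1) = 0) :
    gB n a n = (∑ u ∈ Icc 2 (n - 2), a u) + n := by
  unfold gB
  have e1 : n + 1 - n = 1 := by omega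
  have hle : (1 : ℕ) ≤ n - 1 := by omega
  have e2 : (1 : ℕ) + 1 = 2 := rfl
  rw [e1, Finset.Icc_eq_cons_Ioc hle, Finset.sum_cons, ← Finset.Icc_add_one_left_eq_Ioc,
    e2, h1]
  have e3 : n - 1 = (n - 2) + 1 := by omega
  rw [e3, Finset.sum_Icc_succ_top (by omega), ← e3, hn1]
  ring

lemma gB_pretop (n : ℕ) (a : ℕ → ℤ) (hn : 3 ≤ n) (hn1 : a (n - 1) = 0) :
    gB n a (n - 1) = (∑ u ∈ Icc 2 (n - 2), a u) + n - 1 := by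
  unfold gB
  have e1 : n + 1 - (n - 1) = 2 := by omega
  have e3 : n - 1 = (n - 2) + 1 := by omega
  rw [e1, e3, Finset.sum_Icc_succ_top (by omega), ← e3, hn1]
  have : ((n - 1 : ℕ) : ℤ) = (n : ℤ) - 1 := by omega
  rw [this]
  ring

/-- If `g 1 = 1` and `g` increases by 1 or 2 at each step up to `n`, then every
integer `t` in `[1, g n]` is either a value of `g`, or squeezed between two
consecutive values `g j = t - 1`, `g (j+1) = t + 1`. -/
lemma hit (g : ℕ → ℤ) : ∀ n : ℕ, 1 ≤ n → g 1 = 1 →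
    (∀ i, 1 ≤ i → i < n → g (i + 1) = g i + 1 ∨ g (i + 1) = g i + 2) →
    ∀ t : ℤ, 1 ≤ t → t ≤ g n →
    ∃ j, 1 ≤ j ∧ j ≤ n ∧
      (g j = t ∨ (j + 1 ≤ n ∧ g j = t - 1 ∧ g (j + 1) = t + 1)) := by
  intro n
  induction n with
  | zero => omega
  | succ m ih =>
    intro _ hg1 hstep t ht1 ht2
    by_cases hm : m = 0
    · subst hm
      simp only [Nat.zero_add] at ht2
      exact ⟨1, le_refl 1, le_refl 1, Or.inl (by omega)⟩
    · by_cases hle : t ≤ g m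
      · obtain ⟨j, hj1, hj2, hj3⟩ :=
          ih (by omega) hg1 (fun i a b => hstep i a (by omega)) t ht1 hle
        refine ⟨j, hj1, by omega, ?_⟩
        rcases hj3 with h | h
        · exact Or.inl h
        · exact Or.inr ⟨by omega, h.2.1, h.2.2⟩
      · push_neg at hle
        rcases hstep m (by omega) (by omega) with h | h
        · exact ⟨m + 1, by omega, le_refl _, Or.inl (by omega)⟩
        · by_cases ht : t = g m + 1
          · exact ⟨m, by omega, by omega, Or.inr ⟨le_refl _, by omega, by omega⟩⟩
          · exact ⟨m + 1, by omega, le_refl _, Or.inl (by omega)⟩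

/-- Corollary 3.15 for `Bₙ/P(αₙ)`: if `a₁ = a_{n-1} = aₙ = 0` and `0 ≤ aᵤ ≤ 1` for
`2 ≤ u ≤ n-2`, then every integer in `[1, M^B_{n,a} = 2∑_{u=2}^{n-2} aᵤ + 2n - 1]`
is an entry of the step matrix. -/
theorem cor_B_eq (n : ℕ) (hn : 3 ≤ n) (a : ℕ → ℤ)
    (h1 : a 1 = 0) (hn1 : a (n - 1) = 0) (hnn : a n = 0)
    (hb : ∀ u, 2 ≤ u → u ≤ n - 2 → 0 ≤ a u ∧ a u ≤ 1) :
    ∀ l : ℤ, 1 ≤ l →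
      l ≤ 2 * (∑ u ∈ Icc 2 (n - 2), a u) + 2 * (n : ℤ) - 1 →
      (l : ℚ) ∈ SBn n a := by
  intro l hl1 hl2
  set A : ℤ := ∑ u ∈ Icc 2 (n - 2), a u with hA
  have hg1 : gB n a 1 = 1 := gB_one n a (by omega)
  have hg2 : gB n a 2 = 2 := gB_two n a (by omega) hn1
  have hgn : gB n a n = A + n := gB_top n a hn h1 hn1
  have hgn1 : gB n a (n - 1) = A + n - 1 := gB_pretop n a hn hn1
  have hstep' : ∀ i, 1 ≤ i → i < n →
      gB n a (i + 1) = gB n a i + 1 ∨ gB n a (i + 1) = gB n a i + 2 := by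
    intro i hi hi'
    have hs := gB_step n a i hi hi'
    have hbound : 0 ≤ a (n - i) ∧ a (n - i) ≤ 1 := by
      rcases eq_or_ne (n - i) 1 with h | h
      · rw [h, h1]; exact ⟨le_refl 0, by norm_num⟩
      · rcases eq_or_ne (n - i) (n - 1) with h' | h'
        · rw [h', hn1]; exact ⟨le_refl 0, by norm_num⟩
        · exact hb _ (by omega) (by omega)
    omega
  have hmem : ∀ i j : ℕ, 1 ≤ i → i ≤ j → j ≤ n →
      l = gB n a i + gB n a j - 1 → (l : ℚ) ∈ SBn n a := by
    intro i j hi hij hjn heq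
    refine ⟨i, j, hi, hij, hjn, ?_⟩
    have := congrArg (fun z : ℤ => (z : ℚ)) heq
    unfold gB at this
    push_cast at this ⊢
    rw [hnn]
    push_cast
    linarith
  by_cases hc : l ≤ A + n
  · obtain ⟨j, hj1, hjn, hj3⟩ :=
      hit (gB n a) n (by omega) hg1 hstep' l hl1 (by omega)
    rcases hj3 with h | ⟨hjn', h1', h2'⟩
    · exact hmem 1 j le_rfl hj1 hjn (by omega)
    · have hj2 : 2 ≤ j := by
        by_contra hcon
        have hj : j = 1 := by omega
        subst hj
        have e : (1 : ℕ) + 1 = 2 := rfl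
        rw [e] at h2'
        omega
      exact hmem 2 j (by norm_num) hj2 hjn (by omega)
  · push_neg at hc
    set t : ℤ := l + 1 - (A + n) with ht
    have ht1 : 1 ≤ t := by omega
    have ht2 : t ≤ gB n a n := by omega
    obtain ⟨j, hj1, hjn, hj3⟩ :=
      hit (gB n a) n (by omega) hg1 hstep' t ht1 ht2
    rcases hj3 with h | ⟨hjn', h1', h2'⟩
    · exact hmem j n hj1 hjn le_rfl (by omega)
    · have hne : j + 1 ≠ n := by
        intro he
        have hj : j = n - 1 := by omega
        rw [hj] at h1'
        rw [he] at h2'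
        omega
      exact hmem (j + 1) (n - 1) (by omega) (by omega) (by omega) (by omega)
end
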